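/- arXiv:1710.08499 — 2 statements merged into one kernel-verified Lean document; each statement's English description precedes it below -/
import Mathlib

section
/- Let k be a field and A a finite-dimensional associative k-algebra. For every Y ∈ Matrix (Fin n) (Fin n) A, the trace of the linear endomorphism ad Y : X ↦ Y*X − X*Y of Matrix (Fin n) (Fin n) A equals n · Σ_{i} tr(ad (Y i i) : A → A). Consequently, if A is unimodular, then the matrix algebra Matrix (Fin n) (Fin n) A is unimodular. (This is the content of the paper's claim that unimodularity of A₀ implies the invariance of the volume element ϖ under the coadjoint action of A₀ ⊗ gl_N, underlying Proposition 1.) -/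
/-- `A` is unimodular if `tr (ad a) = 0` for every `a ∈ A`, where
`ad a = LinearMap.mulLeft k a - LinearMap.mulRight k a`. -/
def Unimodular (k A : Type*) [Field k] [Ring A] [Algebra k A] : Prop :=
  ∀ a : A, LinearMap.trace k A (LinearMap.mulLeft k a - LinearMap.mulRight k a) = 0

section Aux

variable {k : Type*} [Field k] {A : Type*} [Ring A] [Algebra k A] [FiniteDimensional k A]

lemma trace_eq_sum_repr {ι : Type*} [Fintype ι] [DecidableEq ι] (b : Module.Basis ι k A)
    (f : A →ₗ[k] A) : LinearMap.trace k A f = ∑ i, b.repr (f (b i)) i := by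
  rw [LinearMap.trace_eq_matrix_trace k b, Matrix.trace]
  simp [Matrix.diag, LinearMap.toMatrix_apply]

lemma matrix_basis_repr {ι : Type*} (b : Module.Basis ι k A) (n : ℕ)
    (X : Matrix (Fin n) (Fin n) A) (i j : Fin n) (m : ι) :
    (b.matrix (Fin n) (Fin n)).repr X (i, j, m) = b.repr (X i j) m := by
  simp [Module.Basis.matrix, Module.Basis.repr_reindex_apply, -Module.Basis.repr_reindex]

lemma trace_mulLeft_matrix {ι : Type*} [Fintype ι] [DecidableEq ι] (b : Module.Basis ι k A)
    (n : ℕ) (Y : Matrix (Fin n) (Fin n) A) :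
    LinearMap.trace k (Matrix (Fin n) (Fin n) A) (LinearMap.mulLeft k Y)
      = n • ∑ i, LinearMap.trace k A (LinearMap.mulLeft k (Y i i)) := by
  classical
  rw [trace_eq_sum_repr (b.matrix (Fin n) (Fin n))]
  simp_rw [Fintype.sum_prod_type]
  have : ∀ i j : Fin n, ∑ m : ι,
      (b.matrix (Fin n) (Fin n)).repr
        (LinearMap.mulLeft k Y (b.matrix (Fin n) (Fin n) (i, j, m))) (i, j, m)
      = LinearMap.trace k A (LinearMap.mulLeft k (Y i i)) := by
    intro i j
    rw [trace_eq_sum_repr b]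
    refine Finset.sum_congr rfl fun m _ => ?_
    rw [matrix_basis_repr]
    simp [LinearMap.mulLeft_apply, Matrix.mul_apply, Matrix.single,
      Finset.mul_sum, apply_ite, mul_ite]
  simp_rw [this]
  rw [Finset.smul_sum]
  simp [Finset.sum_const]

lemma trace_mulRight_matrix {ι : Type*} [Fintype ι] [DecidableEq ι] (b : Module.Basis ι k A)
    (n : ℕ) (Y : Matrix (Fin n) (Fin n) A) :
    LinearMap.trace k (Matrix (Fin n) (Fin n) A) (LinearMap.mulRight k Y)
      = n • ∑ i, LinearMap.trace k A (LinearMap.mulRight k (Y i i)) := by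
  classical
  rw [trace_eq_sum_repr (b.matrix (Fin n) (Fin n))]
  simp_rw [Fintype.sum_prod_type]
  have : ∀ i j : Fin n, ∑ m : ι,
      (b.matrix (Fin n) (Fin n)).repr
        (LinearMap.mulRight k Y (b.matrix (Fin n) (Fin n) (i, j, m))) (i, j, m)
      = LinearMap.trace k A (LinearMap.mulRight k (Y j j)) := by
    intro i j
    rw [trace_eq_sum_repr b]
    refine Finset.sum_congr rfl fun m _ => ?_
    rw [matrix_basis_repr]
    simp [LinearMap.mulRight_apply, Matrix.mul_apply, Matrix.single,
      Finset.sum_mul, apply_ite, ite_mul]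
  simp_rw [this]
  rw [Finset.sum_comm, Finset.smul_sum]
  simp [Finset.sum_const]

end Aux

/-- For every matrix `Y` over a finite-dimensional algebra `A`, the trace of
`ad Y` on the matrix algebra equals `n • ∑ i, tr (ad (Y i i))`; consequently
unimodularity of `A` implies unimodularity of `Matrix (Fin n) (Fin n) A`. -/
theorem stmt_2 (k : Type*) [Field k] (A : Type*) [Ring A] [Algebra k A]
    [FiniteDimensional k A] :
    (∀ (n : ℕ) (Y : Matrix (Fin n) (Fin n) A),
      LinearMap.trace k (Matrix (Fin n) (Fin n) A)
          (LinearMap.mulLeft k Y - LinearMap.mulRight k Y)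
        = n • ∑ i, LinearMap.trace k A
            (LinearMap.mulLeft k (Y i i) - LinearMap.mulRight k (Y i i))) ∧
    (Unimodular k A → ∀ n : ℕ, Unimodular k (Matrix (Fin n) (Fin n) A)) := by
  classical
  have b := Module.finBasis k A
  have key : ∀ (n : ℕ) (Y : Matrix (Fin n) (Fin n) A),
      LinearMap.trace k (Matrix (Fin n) (Fin n) A)
          (LinearMap.mulLeft k Y - LinearMap.mulRight k Y)
        = n • ∑ i, LinearMap.trace k A
            (LinearMap.mulLeft k (Y i i) - LinearMap.mulRight k (Y i i)) := by
    intro n Y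
    rw [map_sub, trace_mulLeft_matrix b, trace_mulRight_matrix b]
    simp_rw [map_sub, Finset.sum_sub_distrib, smul_sub]
  refine ⟨key, fun hA n Y => ?_⟩
  rw [key n Y]
  simp [hA _]
end

section
/- Let k be a field, A a finite-dimensional associative k-algebra, and η a symmetric invariant nondegenerate bilinear form on A, with dual bases (e_α)_{α ∈ Fin r}, (f_α)_{α ∈ Fin r}. Then A is unimodular (i.e. tr(ad a) = 0 for all a ∈ A) if and only if Σ_α (e_α * f_α − f_α * e_α) = 0 in A. (Coordinate criterion for the paper's unimodularity Condition (7).) -/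
/-- Coordinate criterion for unimodularity: given a symmetric invariant
nondegenerate bilinear form with dual bases `(e_α)`, `(f_α)`, the algebra `A`
is unimodular iff `∑ α, (e_α * f_α - f_α * e_α) = 0`. -/
theorem stmt_5 {k : Type*} [Field k] {A : Type*} [Ring A] [Algebra k A]
    [FiniteDimensional k A]
    (η : A →ₗ[k] A →ₗ[k] k)
    (hsymm : ∀ a b : A, η a b = η b a)
    (hinv : ∀ a b c : A, η (a * b) c = η a (b * c))
    (hnd : ∀ a : A, (∀ b : A, η a b = 0) → a = 0)
    (r : ℕ) (e : Module.Basis (Fin r) k A) (f : Fin r → A)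
    (hdual : ∀ α β : Fin r, η (e α) (f β) = if α = β then 1 else 0) :
    (∀ a : A,
        LinearMap.trace k A (LinearMap.mulLeft k a - LinearMap.mulRight k a) = 0)
      ↔ ∑ α, (e α * f α - f α * e α) = 0 := by
  have hrepr : ∀ (x : A) (β : Fin r), e.repr x β = η x (f β) := by
    intro x β
    conv_rhs => rw [← e.sum_repr x]
    simp only [map_sum, LinearMap.map_smul₂, LinearMap.sum_apply, LinearMap.smul_apply, hdual,
      smul_eq_mul, mul_ite, mul_one, mul_zero]
    rw [Finset.sum_ite_eq' Finset.univ β]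
    simp
  have htr : ∀ φ : A →ₗ[k] A, LinearMap.trace k A φ = ∑ α, η (φ (e α)) (f α) := by
    intro φ
    rw [LinearMap.trace_eq_matrix_trace k e, Matrix.trace]
    refine Finset.sum_congr rfl fun α _ => ?_
    rw [Matrix.diag_apply, LinearMap.toMatrix_apply, hrepr]
  have key : ∀ a : A,
      LinearMap.trace k A (LinearMap.mulLeft k a - LinearMap.mulRight k a)
        = η a (∑ α, (e α * f α - f α * e α)) := by
    intro a
    rw [htr]
    rw [map_sum]
    refine Finset.sum_congr rfl fun α _ => ?_
    simp only [LinearMap.sub_apply, LinearMap.mulLeft_apply, LinearMap.mulRight_apply,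
      map_sub, LinearMap.sub_apply]
    congr 1
    · rw [hinv]
    · rw [hsymm (e α * a) (f α), ← hinv, hsymm]
  constructor
  · intro h
    refine hnd _ fun b => ?_
    rw [hsymm, ← key b, h b]
  · intro h a
    rw [key a, h, map_zero]
end
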